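/- The cubic equation 2 − 20α + 35α² − 35α³ = 0 has exactly one real root, given by α = 1/3 − ((34300 + 525√6699)^{2/3} − 875)/(105 (34300 + 525√6699)^{1/3}). -/

import Mathlib

theorem cubic_unique_real_root (α : ℝ) :
    2 - 20 * α + 35 * α ^ 2 - 35 * α ^ 3 = 0 ↔
      α = 1 / 3 -
        ((34300 + 525 * Real.sqrt 6699) ^ ((2 : ℝ) / 3) - 875) /
          (105 * (34300 + 525 * Real.sqrt 6699) ^ ((1 : ℝ) / 3)) := by
  set s := Real.sqrt 6699 with hs_def
  have hs0 : (0:ℝ) ≤ s := Real.sqrt_nonneg _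
  have hs : s ^ 2 = 6699 := Real.sq_sqrt (by norm_num)
  have hb : (0:ℝ) < 34300 + 525 * s := by positivity
  set t := (34300 + 525 * s) ^ ((1:ℝ)/3) with ht_def
  have ht0 : 0 < t := Real.rpow_pos_of_pos hb _
  have ht3 : t ^ 3 = 34300 + 525 * s := by
    rw [ht_def, ← Real.rpow_natCast _ 3, ← Real.rpow_mul hb.le]
    norm_num
  have ht2 : (34300 + 525 * s) ^ ((2:ℝ)/3) = t ^ 2 := by
    rw [ht_def, ← Real.rpow_natCast _ 2, ← Real.rpow_mul hb.le]
    norm_num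
  rw [ht2]
  set r : ℝ := 1/3 - (t^2 - 875)/(105 * t) with hr_def
  have key : t ^ 6 = 68600 * t ^ 3 + 669921875 := by
    have : t ^ 6 = (t ^ 3) ^ 2 := by ring
    rw [this, ht3]
    nlinarith [hs]
  have hpr : 2 - 20*r + 35*r^2 - 35*r^3 = 0 := by
    rw [hr_def]
    have h105 : (105 : ℝ) * t ≠ 0 := by positivity
    field_simp
    linear_combination 945 * key
  constructor
  · intro h
    have hfac : (α - r) * (35*α^2 + 35*α*r + 35*r^2 - 35*α - 35*r + 20) = 0 := by
      linear_combination hpr - h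
    have hQ : 35*α^2 + 35*α*r + 35*r^2 - 35*α - 35*r + 20 > 0 := by
      nlinarith [sq_nonneg (2*α + r - 1), sq_nonneg (3*r - 1)]
    have : α - r = 0 := by
      rcases mul_eq_zero.mp hfac with h' | h'
      · exact h'
      · linarith
    linarith
  · intro h
    rw [h]
    linarith [hpr]
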